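/- For every nonzero integer n, letting α = 3 + 3/(2*(9*n - 1)), the Möbius transformation given by the matrix B_α * A^{-1} * B_α^{2n} * A^{-3(9n-1)} sends 0 to 1/2, where A = [[1,1],[0,1]] and B_α = [[1,0],[α,1]] are matrices in SL(2, ℝ). -/

import Mathlib

open Matrix

lemma lowpow (c : ℝ) (k : ℤ) :
    (!![1, 0; c, 1] : Matrix (Fin 2) (Fin 2) ℝ) ^ k = !![1, 0; k * c, 1] := by
  have hdet : IsUnit (!![1, 0; c, 1] : Matrix (Fin 2) (Fin 2) ℝ).det := by
    simp [Matrix.det_fin_two_of]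
  have hinv : (!![1, 0; c, 1] : Matrix (Fin 2) (Fin 2) ℝ)⁻¹ = !![1, 0; -c, 1] := by
    apply Matrix.inv_eq_right_inv
    ext i j; fin_cases i <;> fin_cases j <;>
      simp [Matrix.mul_apply, Fin.sum_univ_two]
  induction k using Int.induction_on with
  | zero => ext i j; fin_cases i <;> fin_cases j <;> simp
  | succ m ih =>
      rw [Matrix.zpow_add_one hdet, ih]
      ext i j; fin_cases i <;> fin_cases j <;>
        simp [Matrix.mul_apply, Fin.sum_univ_two] <;> ring
  | pred m ih =>
      rw [show (-(m:ℤ) - 1) = (-(m:ℤ)) - 1 by ring, Matrix.zpow_sub_one hdet, ih, hinv]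
      ext i j; fin_cases i <;> fin_cases j <;>
        simp [Matrix.mul_apply, Fin.sum_univ_two] <;> ring

lemma uppow (k : ℤ) :
    (!![1, 1; 0, 1] : Matrix (Fin 2) (Fin 2) ℝ) ^ k = !![1, (k:ℝ); 0, 1] := by
  have hdet : IsUnit (!![1, 1; 0, 1] : Matrix (Fin 2) (Fin 2) ℝ).det := by
    simp [Matrix.det_fin_two_of]
  have hinv : (!![1, 1; 0, 1] : Matrix (Fin 2) (Fin 2) ℝ)⁻¹ = !![1, -1; 0, 1] := by
    apply Matrix.inv_eq_right_inv
    ext i j; fin_cases i <;> fin_cases j <;>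
      simp [Matrix.mul_apply, Fin.sum_univ_two]
  induction k using Int.induction_on with
  | zero => ext i j; fin_cases i <;> fin_cases j <;> simp
  | succ m ih =>
      rw [Matrix.zpow_add_one hdet, ih]
      ext i j; fin_cases i <;> fin_cases j <;>
        simp [Matrix.mul_apply, Fin.sum_univ_two] <;> push_cast <;> ring
  | pred m ih =>
      rw [show (-(m:ℤ) - 1) = (-(m:ℤ)) - 1 by ring, Matrix.zpow_sub_one hdet, ih, hinv]
      ext i j; fin_cases i <;> fin_cases j <;>
        simp [Matrix.mul_apply, Fin.sum_univ_two] <;> push_cast <;> ring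

theorem orbit_test_first_family (n : ℤ) (hn : n ≠ 0) :
    let α : ℝ := 3 + 3 / (2 * (9 * (n : ℝ) - 1))
    let A : Matrix (Fin 2) (Fin 2) ℝ := !![1, 1; 0, 1]
    let B : Matrix (Fin 2) (Fin 2) ℝ := !![1, 0; α, 1]
    let M : Matrix (Fin 2) (Fin 2) ℝ := B * A⁻¹ * B ^ (2 * n) * A ^ (-(3 * (9 * n - 1)))
    M 0 1 / M 1 1 = 1 / 2 := by
  intro α A B M
  have ht : (9 * (n : ℝ) - 1) ≠ 0 := by
    have h1 : (9 * n - 1 : ℤ) ≠ 0 := by omega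
    have : ((9 * n - 1 : ℤ) : ℝ) ≠ 0 := Int.cast_ne_zero.mpr h1
    push_cast at this
    convert this using 1
  have hAinv : A⁻¹ = !![1, -1; 0, 1] := by
    apply Matrix.inv_eq_right_inv
    ext i j; fin_cases i <;> fin_cases j <;>
      simp [A, Matrix.mul_apply, Fin.sum_univ_two]
  have hB : B ^ (2 * n) = !![1, 0; (2 * n : ℤ) * α, 1] := lowpow α (2 * n)
  have hA : A ^ (-(3 * (9 * n - 1))) = !![1, ((-(3 * (9 * n - 1)) : ℤ) : ℝ); 0, 1] :=
    uppow _
  have hM01 : M 0 1 = 2 * (9 * (n:ℝ) - 1) ^ 2 := by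
    simp only [M, hAinv, hB, hA]
    simp [B, Matrix.mul_apply, Fin.sum_univ_two, α]
    push_cast
    linear_combination (9 * (n:ℝ)) * mul_inv_cancel₀ (mul_ne_zero two_ne_zero ht)
  have hM11 : M 1 1 = 4 * (9 * (n:ℝ) - 1) ^ 2 := by
    simp only [M, hAinv, hB, hA]
    simp [B, Matrix.mul_apply, Fin.sum_univ_two, α]
    push_cast
    field_simp
    ring
  rw [hM01, hM11]
  have h2 : (9 * (n:ℝ) - 1) ^ 2 ≠ 0 := pow_ne_zero _ ht
  field_simp
  ring
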